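/- Let D > 0, λ > 0 and let Q : ℝ → ℝ be twice continuously differentiable, λ-periodic, and not constant on [0,λ]. With L = ∫_0^λ e^{−Q(y)/D} dy, L̂ = ∫_0^λ e^{Q(y)/D} dy, μ(dy) = e^{−Q(y)/D} dy / L, and 1 + χ'(y) = (λ/L̂) e^{Q(y)/D}, the averaged dispersion Φ̄ = √(2D) ∫_0^λ (1 + χ'(y)) μ(dy) satisfies Φ̄² < q, where q = 2D ∫_0^λ (1 + χ'(y))² μ(dy) = 2Dλ²/(L L̂). Hence the choice Φ(x) = ∫(1+∂χ/∂y)σ dμ violates the requirement Φ(x)Φ(x)ᵀ = q(x). -/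

import Mathlib

open intervalIntegral

/-- For nonconstant `Q`, the averaged dispersion
`Φ̄ = √(2D) ∫_0^λ (1+χ'(y)) μ(dy)` satisfies `Φ̄² < q`, where
`q = 2D ∫_0^λ (1+χ')² dμ = 2Dλ²/(L L̂)`; hence the averaged dispersion cannot
satisfy `Φ̄² = q`. -/
theorem averaged_dispersion_mismatch (D lam : ℝ) (hD : 0 < D) (hlam : 0 < lam)
    (Q : ℝ → ℝ) (hQ : ContDiff ℝ 2 Q) (hQper : ∀ y, Q (y + lam) = Q y)
    (hQnc : ¬ (∀ x ∈ Set.Icc (0:ℝ) lam, ∀ y ∈ Set.Icc (0:ℝ) lam, Q x = Q y))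
    (L Lhat : ℝ)
    (hL : L = ∫ y in (0:ℝ)..lam, Real.exp (-Q y / D))
    (hLhat : Lhat = ∫ y in (0:ℝ)..lam, Real.exp (Q y / D))
    (χ : ℝ → ℝ)
    (hχ' : ∀ y, 1 + deriv χ y = (lam / Lhat) * Real.exp (Q y / D))
    (Phibar qeff : ℝ)
    (hPhibar : Phibar = Real.sqrt (2 * D) *
      ((1 / L) * ∫ y in (0:ℝ)..lam, (1 + deriv χ y) * Real.exp (-Q y / D)))
    (hqeff : qeff = 2 * D *
      ((1 / L) * ∫ y in (0:ℝ)..lam, (1 + deriv χ y) ^ 2 * Real.exp (-Q y / D))) :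
    qeff = 2 * D * lam ^ 2 / (L * Lhat) ∧
    Phibar ^ 2 < qeff := by
  have hQc : Continuous Q := hQ.continuous
  set g : ℝ → ℝ := fun y => Real.exp (Q y / D) with hg
  have hgc : Continuous g := Real.continuous_exp.comp (hQc.div_const D)
  have hGc : Continuous (fun y => Real.exp (-Q y / D)) :=
    Real.continuous_exp.comp ((hQc.neg).div_const D)
  -- positivity of L and Lhat
  have hLhat_pos : 0 < Lhat := by
    rw [hLhat]
    exact intervalIntegral.integral_pos hlam hgc.continuousOn
      (fun x _ => (Real.exp_pos _).le) ⟨0, ⟨le_rfl, hlam.le⟩, Real.exp_pos _⟩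
  have hL_pos : 0 < L := by
    rw [hL]
    exact intervalIntegral.integral_pos hlam hGc.continuousOn
      (fun x _ => (Real.exp_pos _).le) ⟨0, ⟨le_rfl, hlam.le⟩, Real.exp_pos _⟩
  -- first integrand is constant
  have h1 : ∀ y, (1 + deriv χ y) * Real.exp (-Q y / D) = lam / Lhat := by
    intro y
    rw [hχ' y, mul_assoc, ← Real.exp_add]
    have : Q y / D + -Q y / D = 0 := by ring
    rw [this, Real.exp_zero, mul_one]
  have hI1 : (∫ y in (0:ℝ)..lam, (1 + deriv χ y) * Real.exp (-Q y / D))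
      = lam ^ 2 / Lhat := by
    simp only [h1]
    rw [intervalIntegral.integral_const]
    simp [smul_eq_mul]
    ring
  -- second integrand
  have h2 : ∀ y, (1 + deriv χ y) ^ 2 * Real.exp (-Q y / D)
      = (lam / Lhat) ^ 2 * Real.exp (Q y / D) := by
    intro y
    rw [hχ' y, mul_pow, mul_assoc, ← Real.exp_nat_mul, ← Real.exp_add]
    congr 2
    ring
  have hI2 : (∫ y in (0:ℝ)..lam, (1 + deriv χ y) ^ 2 * Real.exp (-Q y / D))
      = lam ^ 2 / Lhat := by
    simp only [h2]
    rw [intervalIntegral.integral_const_mul, ← hLhat]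
    field_simp
  -- the key strict inequality lam^2 < L * Lhat
  set c : ℝ := Lhat / lam with hc
  have hc_pos : 0 < c := div_pos hLhat_pos hlam
  have key : lam ^ 2 < L * Lhat := by
    -- pointwise: 2/c - g y / c^2 ≤ exp(-Q y / D) = 1/(g y)
    have hginv : ∀ y, Real.exp (-Q y / D) = 1 / g y := by
      intro y
      rw [hg]
      simp [Real.exp_neg, neg_div]
    have hle : ∀ y, 2 / c - g y / c ^ 2 ≤ Real.exp (-Q y / D) := by
      intro y
      rw [hginv y]
      have hgy : 0 < g y := Real.exp_pos _
      rw [div_sub_div _ _ (ne_of_gt hc_pos) (ne_of_gt (pow_pos hc_pos 2)),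
        div_le_div_iff₀ (by positivity) hgy]
      nlinarith [sq_nonneg (g y - c)]
    -- strict at some point
    push_neg at hQnc
    obtain ⟨x, hx, y, hy, hxy⟩ := hQnc
    have hgd : g x ≠ g y := by
      intro h
      apply hxy
      have h2' : Q x / D = Q y / D := Real.exp_injective h
      field_simp [hD.ne'] at h2'
      exact h2'
    have hex : ∃ z ∈ Set.Icc (0:ℝ) lam, g z ≠ c := by
      by_contra h
      push_neg at h
      exact hgd ((h x hx).trans (h y hy).symm)
    obtain ⟨z, hz, hgz⟩ := hex
    have hlt : 2 / c - g z / c ^ 2 < Real.exp (-Q z / D) := by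
      rw [hginv z]
      have hgy : 0 < g z := Real.exp_pos _
      rw [div_sub_div _ _ (ne_of_gt hc_pos) (ne_of_gt (pow_pos hc_pos 2)),
        div_lt_div_iff₀ (by positivity) hgy]
      have hne : g z - c ≠ 0 := sub_ne_zero.mpr hgz
      have : (g z - c) ^ 2 > 0 := by positivity
      nlinarith
    have hint := intervalIntegral.integral_lt_integral_of_continuousOn_of_le_of_exists_lt
      hlam (Continuous.continuousOn (by continuity :
        Continuous fun y => 2 / c - g y / c ^ 2)) hGc.continuousOn
      (fun x _ => hle x) ⟨z, hz, hlt⟩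
    rw [← hL] at hint
    have hint' : (∫ y in (0:ℝ)..lam, (2 / c - g y / c ^ 2))
        = lam ^ 2 / Lhat := by
      have : (∫ y in (0:ℝ)..lam, (2 / c - g y / c ^ 2))
          = (∫ y in (0:ℝ)..lam, (2 / c)) - ∫ y in (0:ℝ)..lam, g y / c ^ 2 := by
        apply intervalIntegral.integral_sub
        · exact intervalIntegrable_const
        · exact ((hgc.div_const _).intervalIntegrable _ _)
      rw [this]
      have : (∫ y in (0:ℝ)..lam, g y / c ^ 2)
          = (∫ y in (0:ℝ)..lam, g y) / c ^ 2 :=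
        intervalIntegral.integral_div _ _
      rw [this, ← hLhat, intervalIntegral.integral_const]
      rw [hc]
      field_simp
      rw [smul_eq_mul, sub_zero, mul_div_assoc', mul_div_assoc', mul_div_cancel_left₀ _ hLhat_pos.ne']; ring
    rw [hint'] at hint
    calc lam ^ 2 = (lam ^ 2 / Lhat) * Lhat := by field_simp
    _ < L * Lhat := by exact mul_lt_mul_of_pos_right hint hLhat_pos
  -- conclude
  have hq : qeff = 2 * D * lam ^ 2 / (L * Lhat) := by
    rw [hqeff, hI2]; field_simp
  refine ⟨hq, ?_⟩
  rw [hq, hPhibar, hI1, mul_pow, Real.sq_sqrt (by linarith : (0:ℝ) ≤ 2 * D)]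
  have e1 : 2 * D * ((1 / L) * (lam ^ 2 / Lhat)) ^ 2
      = 2 * D * lam ^ 2 / (L * Lhat) * (lam ^ 2 / (L * Lhat)) := by
    field_simp
  rw [e1]
  have hpos : 0 < 2 * D * lam ^ 2 / (L * Lhat) := by positivity
  have hlt1 : lam ^ 2 / (L * Lhat) < 1 := by
    rw [div_lt_one (by positivity)]
    exact key
  exact mul_lt_of_lt_one_right hpos hlt1
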